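/- The tetrahedron E^2_{(5,1)} = conv{(1,0,0),(0,0,1),(3,7,1),(-2,-3,-1)} contains exactly five lattice points (its four vertices and the origin); the four tetrahedra spanned by the origin together with three of its vertices have normalized volumes 3, 4, 5 and 7; consequently E^2_{(5,1)} is lattice-spanning but contains no unimodular tetrahedron with vertices among its lattice points. -/

import Mathlib

set_option maxRecDepth 8000

/-- embedding of integer points into `ℝ³` -/
noncomputable def rr (v : Fin 3 → ℤ) : Fin 3 → ℝ := fun i => (v i : ℝ)

/-- The subgroup of `ℤ³` generated by all differences of lattice points;
`P` is lattice-spanning if it is all of `ℤ³`. -/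
def diffLat (A : Set (Fin 3 → ℤ)) : AddSubgroup (Fin 3 → ℤ) :=
  AddSubgroup.closure {v | ∃ x ∈ A, ∃ y ∈ A, v = x - y}

/-- Normalized volume of the tetrahedron with vertices `f 0, f 1, f 2, f 3`. -/
def normVol (f : Fin 4 → (Fin 3 → ℤ)) : ℕ :=
  (Matrix.det (Matrix.of fun i j : Fin 3 => (f i.succ - f 0) j)).natAbs

def u1 : Fin 3 → ℤ := ![1, 0, 0]
def u2 : Fin 3 → ℤ := ![0, 0, 1]
def u3 : Fin 3 → ℤ := ![3, 7, 1]
def u4 : Fin 3 → ℤ := ![-2, -3, -1]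

/-- The tetrahedron `E²_{(5,1)}`. -/
noncomputable def E51 : Set (Fin 3 → ℝ) :=
  convexHull ℝ {rr u1, rr u2, rr u3, rr u4}

/-- Its lattice points. -/
def L51 : Set (Fin 3 → ℤ) := {v | rr v ∈ E51}

lemma halfspace_bound (a b c C : ℝ)
    (h1 : a * (rr u1) 0 + b * (rr u1) 1 + c * (rr u1) 2 ≤ C)
    (h2 : a * (rr u2) 0 + b * (rr u2) 1 + c * (rr u2) 2 ≤ C)
    (h3 : a * (rr u3) 0 + b * (rr u3) 1 + c * (rr u3) 2 ≤ C)
    (h4 : a * (rr u4) 0 + b * (rr u4) 1 + c * (rr u4) 2 ≤ C)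
    {x : Fin 3 → ℝ} (hx : x ∈ E51) :
    a * x 0 + b * x 1 + c * x 2 ≤ C := by
  have hlin : IsLinearMap ℝ (fun w : Fin 3 → ℝ => a * w 0 + b * w 1 + c * w 2) := by
    constructor
    · intro x y; simp [Pi.add_apply]; ring
    · intro s x; simp [Pi.smul_apply, smul_eq_mul]; ring
  have := convexHull_min (s := {rr u1, rr u2, rr u3, rr u4})
    (t := {w : Fin 3 → ℝ | a * w 0 + b * w 1 + c * w 2 ≤ C})
    (by intro w hw
        rcases hw with h | h | h | h <;> subst h <;> assumption)
    (convex_halfSpace_le hlin C)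
  exact this hx

lemma zero_mem_E51 : rr 0 ∈ E51 := by
  have h := Finset.centerMass_mem_convexHull (t := (Finset.univ : Finset (Fin 4)))
    (w := (![5, 4, 3, 7] : Fin 4 → ℝ)) (z := ![rr u1, rr u2, rr u3, rr u4])
    (by intro i _; fin_cases i <;> norm_num)
    (by simp [Fin.sum_univ_four]; norm_num)
    (s := {rr u1, rr u2, rr u3, rr u4})
    (by intro i _; fin_cases i <;> simp)
  have heq : (Finset.univ : Finset (Fin 4)).centerMass (![5, 4, 3, 7] : Fin 4 → ℝ)
      ![rr u1, rr u2, rr u3, rr u4] = rr 0 := by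
    funext i
    fin_cases i <;>
      simp [Finset.centerMass, Fin.sum_univ_four, rr, u1, u2, u3, u4] <;> norm_num
  rw [heq] at h
  exact h

lemma L51_eq : L51 = {u1, u2, u3, u4, 0} := by
  ext v
  constructor
  · intro hv
    have hv' : rr v ∈ E51 := hv
    have i1 := halfspace_bound (-14) 6 5 5 (by norm_num [rr, Matrix.cons_val_two, u1]) (by norm_num [rr, Matrix.cons_val_two, u2])
      (by norm_num [rr, Matrix.cons_val_two, u3]) (by norm_num [rr, Matrix.cons_val_two, u4]) hv'
    have i2 := halfspace_bound 4 1 (-15) 4 (by norm_num [rr, Matrix.cons_val_two, u1]) (by norm_num [rr, Matrix.cons_val_two, u2])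
      (by norm_num [rr, Matrix.cons_val_two, u3]) (by norm_num [rr, Matrix.cons_val_two, u4]) hv'
    have i3 := halfspace_bound 3 (-4) 3 3 (by norm_num [rr, Matrix.cons_val_two, u1]) (by norm_num [rr, Matrix.cons_val_two, u2])
      (by norm_num [rr, Matrix.cons_val_two, u3]) (by norm_num [rr, Matrix.cons_val_two, u4]) hv'
    have i4 := halfspace_bound 7 (-3) 7 7 (by norm_num [rr, Matrix.cons_val_two, u1]) (by norm_num [rr, Matrix.cons_val_two, u2])
      (by norm_num [rr, Matrix.cons_val_two, u3]) (by norm_num [rr, Matrix.cons_val_two, u4]) hv'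
    simp only [rr] at i1 i2 i3 i4
    have j1 : (-14) * v 0 + 6 * v 1 + 5 * v 2 ≤ 5 := by exact_mod_cast i1
    have j2 : 4 * v 0 + 1 * v 1 + (-15) * v 2 ≤ 4 := by exact_mod_cast i2
    have j3 : 3 * v 0 + (-4) * v 1 + 3 * v 2 ≤ 3 := by exact_mod_cast i3
    have j4 : 7 * v 0 + (-3) * v 1 + 7 * v 2 ≤ 7 := by exact_mod_cast i4
    have key : (v 0 = 1 ∧ v 1 = 0 ∧ v 2 = 0) ∨ (v 0 = 0 ∧ v 1 = 0 ∧ v 2 = 1) ∨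
        (v 0 = 3 ∧ v 1 = 7 ∧ v 2 = 1) ∨ (v 0 = -2 ∧ v 1 = -3 ∧ v 2 = -1) ∨
        (v 0 = 0 ∧ v 1 = 0 ∧ v 2 = 0) := by
      obtain ⟨a, b, c, ha, hb, hc⟩ : ∃ a b c, v 0 = a ∧ v 1 = b ∧ v 2 = c :=
        ⟨_, _, _, rfl, rfl, rfl⟩
      rw [ha, hb, hc] at j1 j2 j3 j4 ⊢
      have h1 : -1 ≤ c := by omega
      have h2 : c ≤ 1 := by omega
      have h3 : -2 ≤ a := by omega
      have h4 : a ≤ 3 := by omega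
      interval_cases c <;> interval_cases a <;> omega
    rcases key with h | h | h | h | h
    · left; funext i; fin_cases i <;> simp [u1, h.1, h.2.1, h.2.2]
    · right; left; funext i; fin_cases i <;> simp [u2, h.1, h.2.1, h.2.2]
    · right; right; left; funext i; fin_cases i <;> simp [u3, h.1, h.2.1, h.2.2]
    · right; right; right; left; funext i; fin_cases i <;> simp [u4, h.1, h.2.1, h.2.2]
    · right; right; right; right; funext i; fin_cases i <;> simp [h.1, h.2.1, h.2.2]
  · intro hv
    rcases hv with h | h | h | h | h <;> subst h
    · exact subset_convexHull ℝ _ (by simp)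
    · exact subset_convexHull ℝ _ (by simp)
    · exact subset_convexHull ℝ _ (by simp)
    · exact subset_convexHull ℝ _ (by simp)
    · exact zero_mem_E51

def gg : Fin 5 → (Fin 3 → ℤ) := ![u1, u2, u3, u4, 0]

lemma no_unimodular : ∀ c : Fin 4 → Fin 5, normVol (fun i => gg (c i)) ≠ 1 := by decide

theorem stmt16 :
    -- exactly five lattice points: the four vertices and the origin
    L51 = {u1, u2, u3, u4, 0} ∧ L51.ncard = 5 ∧
    -- the four tetrahedra on the origin and three vertices have volumes 3, 4, 5, 7
    normVol ![0, u1, u2, u4] = 3 ∧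
    normVol ![0, u2, u3, u4] = 5 ∧
    normVol ![0, u1, u3, u4] = 4 ∧
    normVol ![0, u1, u2, u3] = 7 ∧
    -- E²_{(5,1)} is lattice-spanning
    (diffLat L51).index = 1 ∧
    -- but contains no unimodular tetrahedron with vertices among its lattice points
    ¬ ∃ f : Fin 4 → (Fin 3 → ℤ), (∀ i, f i ∈ L51) ∧ normVol f = 1 := by
  have hmem : ∀ w ∈ ({u1, u2, u3, u4, 0} : Set (Fin 3 → ℤ)), w ∈ L51 := by
    rw [L51_eq]; exact fun w hw => hw
  refine ⟨L51_eq, ?_, by decide, by decide, by decide, by decide, ?_, ?_⟩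
  · rw [L51_eq]
    have : ({u1, u2, u3, u4, 0} : Set (Fin 3 → ℤ)) =
        (({u1, u2, u3, u4, 0} : Finset (Fin 3 → ℤ)) : Set (Fin 3 → ℤ)) := by
      simp
    rw [this, Set.ncard_coe_finset]
    decide
  · rw [AddSubgroup.index_eq_one]
    rw [AddSubgroup.eq_top_iff']
    intro x
    have h0 : (0 : Fin 3 → ℤ) ∈ L51 := hmem 0 (by simp)
    have m1 : u1 ∈ diffLat L51 :=
      AddSubgroup.subset_closure ⟨u1, hmem u1 (by simp), 0, h0, by simp⟩
    have m2 : u2 ∈ diffLat L51 :=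
      AddSubgroup.subset_closure ⟨u2, hmem u2 (by simp), 0, h0, by simp⟩
    have m3 : u3 ∈ diffLat L51 :=
      AddSubgroup.subset_closure ⟨u3, hmem u3 (by simp), 0, h0, by simp⟩
    have m4 : u4 ∈ diffLat L51 :=
      AddSubgroup.subset_closure ⟨u4, hmem u4 (by simp), 0, h0, by simp⟩
    have hx : x = x 0 • u1 + x 1 • (u1 + u2 + u3 + (2 : ℤ) • u4) + x 2 • u2 := by
      funext i
      fin_cases i <;>
        simp [u1, u2, u3, u4, Pi.add_apply, Pi.smul_apply, smul_eq_mul]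
    rw [hx]
    exact add_mem (add_mem (zsmul_mem m1 _)
      (zsmul_mem (add_mem (add_mem (add_mem m1 m2) m3) (zsmul_mem m4 2)) _))
      (zsmul_mem m2 _)
  · rintro ⟨f, hf, hvol⟩
    have hch : ∀ i, ∃ j : Fin 5, f i = gg j := by
      intro i
      have := hf i
      rw [L51_eq] at this
      rcases this with h | h | h | h | h
      · exact ⟨0, h⟩
      · exact ⟨1, h⟩
      · exact ⟨2, h⟩
      · exact ⟨3, h⟩
      · exact ⟨4, h⟩
    choose c hc using hch
    have : f = fun i => gg (c i) := funext hc
    rw [this] at hvol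
    exact no_unimodular c hvol
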